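/- arXiv:2604.09404 — 3 statements merged into one kernel-verified Lean document; each statement's English description precedes it below -/
import Mathlib

section
/- Let g be a finite-dimensional Lie algebra over ℂ with solvable radical r, and let W be a finite-dimensional irreducible g-module (a nonzero Lie module whose only Lie submodules are 0 and W). Then every element of ⁅g, r⁆ acts as zero on W; that is, x · w = 0 for all x ∈ ⁅g, r⁆ and all w ∈ W. -/
open LieModule Module

section Core

variable {L : Type*} [LieRing L] [LieAlgebra ℂ L]
variable {V : Type*} [AddCommGroup V] [Module ℂ V] [LieRingModule L V] [LieModule ℂ L V]
variable [FiniteDimensional ℂ V]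

/-- The trace argument: a common weight of a bracket-stable set vanishes on brackets. -/
lemma weight_vanish (A : Set L) (y : L) (hA : ∀ a ∈ A, ⁅a, y⁆ ∈ A)
    (χ : L → ℂ) (v : V) (hv : v ≠ 0) (hvE : ∀ a ∈ A, ⁅a, v⁆ = χ a • v)
    {a : L} (ha : a ∈ A) : χ ⁅a, y⁆ = 0 := by
  set f : Module.End ℂ V := toEnd ℂ L V y with hf
  set U : ℕ → Submodule ℂ V := fun k => Submodule.span ℂ ((fun i => (f ^ i) v) '' Set.Iio k)
    with hUdef
  have hUmono : Monotone U := fun i j hij =>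
    Submodule.span_mono (Set.image_mono fun t ht => lt_of_lt_of_le ht hij)
  have hgen : ∀ i k, i < k → (f ^ i) v ∈ U k := fun i k hik =>
    Submodule.subset_span ⟨i, hik, rfl⟩
  have hsucc : ∀ k, (f ^ (k + 1)) v = f ((f ^ k) v) := by
    intro k; rw [pow_succ']; rfl
  -- claim 1
  have claim1 : ∀ k, ∀ b ∈ A, toEnd ℂ L V b ((f ^ k) v) - χ b • (f ^ k) v ∈ U k := by
    intro k
    induction k with
    | zero =>
      intro b hb
      simp only [pow_zero, Module.End.one_apply, toEnd_apply_apply, hvE b hb, sub_self]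
      exact Submodule.zero_mem _
    | succ k ih =>
      intro b hb
      have key : toEnd ℂ L V b ((f ^ (k + 1)) v)
          = f (toEnd ℂ L V b ((f ^ k) v)) + toEnd ℂ L V ⁅b, y⁆ ((f ^ k) v) := by
        rw [hsucc k]
        simp only [toEnd_apply_apply, hf]
        rw [leibniz_lie]
        abel
      have h1 := ih b hb
      have h2 := ih ⁅b, y⁆ (hA b hb)
      have heq : toEnd ℂ L V b ((f ^ (k + 1)) v) - χ b • (f ^ (k + 1)) v
          = f (toEnd ℂ L V b ((f ^ k) v) - χ b • (f ^ k) v)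
            + (toEnd ℂ L V ⁅b, y⁆ ((f ^ k) v) - χ ⁅b, y⁆ • (f ^ k) v)
            + χ ⁅b, y⁆ • (f ^ k) v := by
        rw [key, map_sub, map_smul, hsucc k]
        abel
      rw [heq]
      refine Submodule.add_mem _ (Submodule.add_mem _ ?_ ?_) ?_
      · -- f maps U k into U (k+1)
        have : Submodule.map f (U k) ≤ U (k + 1) := by
          rw [hUdef, Submodule.map_span, Submodule.span_le]
          rintro - ⟨-, ⟨i, hi, rfl⟩, rfl⟩
          exact (hsucc i) ▸ hgen (i + 1) (k + 1) (by simpa using hi)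
        exact this (Submodule.mem_map_of_mem h1)
      · exact hUmono (Nat.le_succ k) h2
      · exact Submodule.smul_mem _ _ (hgen k (k + 1) k.lt_succ_self)
  -- stabilization
  obtain ⟨n, hn⟩ := monotone_stabilizes_iff_noetherian.mpr inferInstance ⟨U, hUmono⟩
  set N := n + 1 with hN
  have hstab : U (N + 1) = U N := ((hn (N + 1) (by omega)).symm.trans (hn N (by omega)))
  -- U N is invariant under f and under every a ∈ A
  have hmapf : ∀ k, Submodule.map f (U k) ≤ U (k + 1) := by
    intro k
    conv_lhs => rw [hUdef]
    rw [Submodule.map_span, Submodule.span_le]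
    rintro - ⟨-, ⟨i, hi, rfl⟩, rfl⟩
    exact (hsucc i) ▸ hgen (i + 1) (k + 1) (by simpa using hi)
  have hfUN : ∀ u ∈ U N, f u ∈ U N := fun u hu =>
    hstab ▸ hmapf N (Submodule.mem_map_of_mem hu)
  have hUNinv : ∀ b ∈ A, ∀ k, ∀ u ∈ U k, toEnd ℂ L V b u ∈ U k := by
    intro b hb k u hu
    have hle : Submodule.map (toEnd ℂ L V b) (U k) ≤ U k := by
      conv_lhs => rw [hUdef]
      rw [Submodule.map_span, Submodule.span_le]
      rintro - ⟨-, ⟨i, hi, rfl⟩, rfl⟩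
      have h1 := claim1 i b hb
      have heq : toEnd ℂ L V b ((f ^ i) v)
          = (toEnd ℂ L V b ((f ^ i) v) - χ b • (f ^ i) v) + χ b • (f ^ i) v := by abel
      rw [heq]
      exact Submodule.add_mem _ (hUmono (le_of_lt hi) h1)
        (Submodule.smul_mem _ _ (hgen i k hi))
    exact hle (Submodule.mem_map_of_mem hu)
  -- restrict everything to U N
  have hbA : ⁅a, y⁆ ∈ A := hA a ha
  set b := ⁅a, y⁆ with hb
  have haInv : ∀ u ∈ U N, toEnd ℂ L V a u ∈ U N := hUNinv a ha N
  have hbInv : ∀ u ∈ U N, toEnd ℂ L V b u ∈ U N := hUNinv b hbA N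
  set a' := (toEnd ℂ L V a).restrict haInv with ha'
  set f' := f.restrict hfUN with hf'
  set b' := (toEnd ℂ L V b).restrict hbInv with hb'
  have hcomm : b' = a' * f' - f' * a' := by
    ext u
    simp only [ha', hf', hb', LinearMap.sub_apply, Module.End.mul_apply, AddSubgroupClass.coe_sub,
      LinearMap.restrict_coe_apply, toEnd_apply_apply, hf, hb]
    rw [lie_lie]
  have htr0 : LinearMap.trace ℂ _ b' = 0 := by
    rw [hcomm, map_sub, LinearMap.trace_mul_comm, sub_self]
  -- the operator b' is (χ b) • 1 plus a nilpotent
  set S : Module.End ℂ V := toEnd ℂ L V b - χ b • 1 with hS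
  have hSmap : ∀ k, ∀ u ∈ U (k + 1), S u ∈ U k := by
    intro k u hu
    have hle : Submodule.map S (U (k + 1)) ≤ U k := by
      conv_lhs => rw [hUdef]
      rw [Submodule.map_span, Submodule.span_le]
      rintro - ⟨-, ⟨i, hi, rfl⟩, rfl⟩
      have h1 := claim1 i b hbA
      have heq : S ((f ^ i) v) = toEnd ℂ L V b ((f ^ i) v) - χ b • (f ^ i) v := by
        simp [hS, LinearMap.sub_apply]
      rw [heq]
      exact hUmono (Nat.lt_succ_iff.mp (by simpa using hi)) h1
    exact hle (Submodule.mem_map_of_mem hu)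
  have hSinv : ∀ u ∈ U N, S u ∈ U N := fun u hu => hUmono n.le_succ (hSmap n u hu)
  have hSpow : ∀ k, ∀ u ∈ U k, (S ^ k) u = 0 := by
    intro k
    induction k with
    | zero =>
      intro u hu
      have hU0 : U 0 = ⊥ := by
        have : Set.Iio (0 : ℕ) = ∅ := by ext i; simp
        simp [hUdef, this]
      rw [hU0, Submodule.mem_bot] at hu
      simp [hu]
    | succ k ihk =>
      intro u hu
      rw [pow_succ]
      exact ihk _ (hSmap k u hu)
  set Nop := S.restrict hSinv with hNop
  have hNnil : Nop ^ N = 0 := by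
    rw [hNop, Module.End.pow_restrict]
    ext u
    exact hSpow N u u.2
  have htrN : LinearMap.trace ℂ _ Nop = 0 :=
    (LinearMap.isNilpotent_trace_of_isNilpotent ⟨N, hNnil⟩).eq_zero
  have hbb' : b' = Nop + χ b • 1 := by
    ext u
    simp [hNop, hb', LinearMap.restrict_coe_apply, hS, LinearMap.sub_apply]
  have hfr : χ b * (finrank ℂ (U N) : ℂ) = 0 := by
    have h := htr0
    rw [hbb', map_add, htrN, zero_add, map_smul, LinearMap.trace_one, smul_eq_mul] at h
    exact h
  have hvU : v ∈ U N := by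
    have h0 : v = (f ^ 0) v := by simp
    rw [h0]; exact hgen 0 N (by omega)
  have hpos : finrank ℂ (U N) ≠ 0 := by
    have hnt : Nontrivial (U N) := ⟨⟨⟨v, hvU⟩, 0, by simp [hv]⟩⟩
    have := Module.finrank_pos (R := ℂ) (M := U N)
    omega
  exact (mul_eq_zero.mp hfr).resolve_right (Nat.cast_ne_zero.mpr hpos)

end Core

section LieTheorem

universe u v

theorem lie_theorem_aux (n : ℕ) : ∀ (L : Type u) [LieRing L] [LieAlgebra ℂ L]
    [FiniteDimensional ℂ L] [LieAlgebra.IsSolvable L], finrank ℂ L = n →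
    ∀ (V : Type v) [AddCommGroup V] [Module ℂ V] [LieRingModule L V] [LieModule ℂ L V]
    [FiniteDimensional ℂ V] [Nontrivial V],
    ∃ (χ : L → ℂ) (v : V), v ≠ 0 ∧ ∀ x : L, ⁅x, v⁆ = χ x • v := by
  induction n using Nat.strong_induction_on with
  | _ n ih =>
    intro L _ _ _ _ hrank V _ _ _ _ _ _
    classical
    rcases Nat.eq_zero_or_pos n with hn | hn
    · -- trivial Lie algebra
      have hsub : Subsingleton L := by
        rw [← Module.finrank_zero_iff (R := ℂ)]; omega
      obtain ⟨v, hv⟩ := exists_ne (0 : V)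
      refine ⟨0, v, hv, fun x => ?_⟩
      rw [Subsingleton.elim x 0]
      simp
    · have hLnt : Nontrivial L := by
        rw [← Module.finrank_pos_iff (R := ℂ)]; omega
      set D := LieAlgebra.derivedSeries ℂ L 1 with hDdef
      have hD : D < ⊤ := LieAlgebra.derivedSeries_lt_top_of_solvable ℂ L
      obtain ⟨x0, -, hx0⟩ := SetLike.exists_of_lt hD
      -- a nonzero functional vanishing on the derived algebra
      have hq : (LieSubmodule.toSubmodule D).mkQ x0 ≠ 0 := by
        simpa [Submodule.mkQ_apply, Submodule.Quotient.mk_eq_zero] using hx0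
      obtain ⟨ψ, hψ⟩ : ∃ ψ : Module.Dual ℂ (L ⧸ LieSubmodule.toSubmodule D),
          ψ ((LieSubmodule.toSubmodule D).mkQ x0) ≠ 0 := by
        by_contra h
        push_neg at h
        exact hq ((Module.forall_dual_apply_eq_zero_iff ℂ _).mp h)
      set φ : L →ₗ[ℂ] ℂ := ψ.comp (LieSubmodule.toSubmodule D).mkQ with hφ
      have hφx0 : φ x0 ≠ 0 := hψ
      have hbr : ∀ x m : L, φ ⁅x, m⁆ = 0 := by
        intro x m
        have hmem : ⁅x, m⁆ ∈ D := by
          rw [hDdef]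
          exact LieSubmodule.lie_mem_lie (LieSubmodule.mem_top x) (LieSubmodule.mem_top m)
        have hz : (LieSubmodule.toSubmodule D).mkQ ⁅x, m⁆ = 0 := by
          rw [Submodule.mkQ_apply, Submodule.Quotient.mk_eq_zero]
          exact hmem
        rw [hφ, LinearMap.comp_apply, hz, map_zero]
      -- the hyperplane ideal
      set I : LieIdeal ℂ L :=
        { LinearMap.ker φ with
          lie_mem := fun {x m} _ => LinearMap.mem_ker.mpr (hbr x m) } with hI
      have hmemI : ∀ z : L, z ∈ I ↔ φ z = 0 := fun z => Iff.rfl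
      have hIsolv : LieAlgebra.IsSolvable I := by
        rw [LieAlgebra.LieIdeal.solvable_iff_le_radical]
        simp
      have hrange : LinearMap.range φ = ⊤ := by
        rw [LinearMap.range_eq_top]
        intro c
        refine ⟨(c / φ x0) • x0, ?_⟩
        rw [map_smul, smul_eq_mul, div_mul_cancel₀ _ hφx0]
      have hfinI : finrank ℂ I < n := by
        have h := LinearMap.finrank_range_add_finrank_ker φ
        rw [hrange, finrank_top, Module.finrank_self] at h
        have : finrank ℂ I = finrank ℂ (LinearMap.ker φ) := rfl
        omega
      obtain ⟨χ, v₀, hv₀, hveig⟩ := ih (finrank ℂ I) hfinI I rfl V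
      set χt : L → ℂ := fun z => if h : z ∈ I then χ ⟨z, h⟩ else 0 with hχt
      set E : Submodule ℂ V :=
        { carrier := {w | ∀ z ∈ I, ⁅z, w⁆ = χt z • w}
          add_mem' := fun {w1 w2} h1 h2 z hz => by rw [lie_add, h1 z hz, h2 z hz, smul_add]
          zero_mem' := fun z hz => by rw [lie_zero, smul_zero]
          smul_mem' := fun c w h z hz => by rw [lie_smul, h z hz, smul_comm] } with hE
      have hmemE : ∀ w : V, w ∈ E ↔ ∀ z ∈ I, ⁅z, w⁆ = χt z • w := fun w => Iff.rfl
      have hv₀E : v₀ ∈ E := by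
        rw [hmemE]
        intro z hz
        have := hveig ⟨z, hz⟩
        rw [LieIdeal.coe_bracket_of_module] at this
        rw [this, hχt]
        simp [hz]
      have hIstable : ∀ t ∈ I, ∀ y : L, ⁅t, y⁆ ∈ I := fun t ht y => by
        rw [hmemI] at ht ⊢
        exact hbr t y
      have hEinv : ∀ y : L, ∀ w ∈ E, ⁅y, w⁆ ∈ E := by
        intro y w hw
        rw [hmemE] at hw ⊢
        intro z hz
        rcases eq_or_ne w 0 with rfl | hw0
        · simp
        · have hvan : χt ⁅z, y⁆ = 0 :=
            weight_vanish (I : Set L) y (fun t ht => hIstable t ht y) χt w hw0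
              (fun t ht => hw t ht) hz
          calc ⁅z, ⁅y, w⁆⁆ = ⁅⁅z, y⁆, w⁆ + ⁅y, ⁅z, w⁆⁆ := leibniz_lie z y w
            _ = χt ⁅z, y⁆ • w + ⁅y, χt z • w⁆ := by
                rw [hw ⁅z, y⁆ (hIstable z hz y), hw z hz]
            _ = χt z • ⁅y, w⁆ := by rw [hvan, zero_smul, zero_add, lie_smul]
      -- eigenvector of x0 inside E
      have hinvE : ∀ u ∈ E, toEnd ℂ L V x0 u ∈ E := fun u hu => by
        rw [toEnd_apply_apply]
        exact hEinv x0 u hu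
      set g' : Module.End ℂ E := (toEnd ℂ L V x0).restrict hinvE with hg'
      have hEnt : Nontrivial E := ⟨⟨⟨v₀, hv₀E⟩, 0, by simp [hv₀]⟩⟩
      obtain ⟨c, hc⟩ := Module.End.exists_eigenvalue g'
      obtain ⟨u, hu⟩ := hc.exists_hasEigenvector
      have hu0 : (u : V) ≠ 0 := fun h => hu.right (Submodule.coe_eq_zero.mp h)
      have huE : (u : V) ∈ E := u.2
      have hzu : ⁅x0, (u : V)⁆ = c • (u : V) := by
        have h1 := hu.apply_eq_smul
        have h2 : (g' u : V) = toEnd ℂ L V x0 (u : V) := LinearMap.restrict_coe_apply _ _ _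
        rw [toEnd_apply_apply] at h2
        rw [← h2, h1, Submodule.coe_smul]
      refine ⟨fun x => χt (x - (φ x / φ x0) • x0) + (φ x / φ x0) * c, u, hu0, fun x => ?_⟩
      have hmem : (x - (φ x / φ x0) • x0) ∈ I := by
        rw [hmemI, map_sub, map_smul, smul_eq_mul, div_mul_cancel₀ _ hφx0, sub_self]
      have hxdec : x = (x - (φ x / φ x0) • x0) + (φ x / φ x0) • x0 := by abel
      conv_lhs => rw [hxdec]
      rw [add_lie, smul_lie, (hmemE (u : V)).mp huE _ hmem, hzu]
      module

end LieTheorem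

attribute [local instance 100] LieRing.ofAssociativeRing

/-- Let `g` be a finite-dimensional complex Lie algebra with solvable
radical `r`, and let `W` be a finite-dimensional irreducible `g`-module.  Then every
element of `⁅g, r⁆` acts as zero on `W`. -/
theorem statement15 (g : Type*) [LieRing g] [LieAlgebra ℂ g] [FiniteDimensional ℂ g]
    (W : Type*) [AddCommGroup W] [Module ℂ W] [LieRingModule g W] [LieModule ℂ g W]
    [FiniteDimensional ℂ W] [Nontrivial W]
    (hirr : ∀ N : LieSubmodule ℂ g W, N = ⊥ ∨ N = ⊤)
    (x : g) (hx : x ∈ ⁅(⊤ : LieIdeal ℂ g), LieAlgebra.radical ℂ g⁆) (w : W) :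
    ⁅x, w⁆ = 0 := by
  classical
  set r := LieAlgebra.radical ℂ g with hr
  obtain ⟨χ, v₀, hv₀, hveig⟩ := lie_theorem_aux (finrank ℂ r) r rfl W
  set χt : g → ℂ := fun z => if h : z ∈ r then χ ⟨z, h⟩ else 0 with hχt
  have hrstable : ∀ t ∈ r, ∀ y : g, ⁅t, y⁆ ∈ r := fun t ht y => by
    rw [← lie_skew]
    exact neg_mem (r.lie_mem ht)
  set E : LieSubmodule ℂ g W :=
    { carrier := {w | ∀ z ∈ r, ⁅z, w⁆ = χt z • w}
      add_mem' := fun {w1 w2} h1 h2 z hz => by rw [lie_add, h1 z hz, h2 z hz, smul_add]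
      zero_mem' := fun z hz => by rw [lie_zero, smul_zero]
      smul_mem' := fun c w h z hz => by rw [lie_smul, h z hz, smul_comm]
      lie_mem := fun {y w} hw => by
        intro z hz
        rcases eq_or_ne w 0 with rfl | hw0
        · simp
        · have hvan : χt ⁅z, y⁆ = 0 :=
            weight_vanish (r : Set g) y (fun t ht => hrstable t ht y) χt w hw0
              (fun t ht => hw t ht) hz
          calc ⁅z, ⁅y, w⁆⁆ = ⁅⁅z, y⁆, w⁆ + ⁅y, ⁅z, w⁆⁆ := leibniz_lie z y w
            _ = χt ⁅z, y⁆ • w + ⁅y, χt z • w⁆ := by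
                rw [hw ⁅z, y⁆ (hrstable z hz y), hw z hz]
            _ = χt z • ⁅y, w⁆ := by rw [hvan, zero_smul, zero_add, lie_smul] } with hE
  have hmemE : ∀ w : W, w ∈ E ↔ ∀ z ∈ r, ⁅z, w⁆ = χt z • w := fun w => Iff.rfl
  have hv₀E : v₀ ∈ E := by
    rw [hmemE]
    intro z hz
    have := hveig ⟨z, hz⟩
    rw [LieIdeal.coe_bracket_of_module] at this
    rw [this, hχt]
    simp [hz]
  have hEtop : E = ⊤ := by
    rcases hirr E with h | h
    · exfalso
      rw [h] at hv₀E
      exact hv₀ (LieSubmodule.mem_bot v₀ |>.mp hv₀E)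
    · exact h
  have hscal : ∀ z ∈ r, ∀ u : W, ⁅z, u⁆ = χt z • u := by
    intro z hz u
    have : u ∈ E := hEtop ▸ LieSubmodule.mem_top u
    exact (hmemE u).mp this z hz
  have hle : ⁅(⊤ : LieIdeal ℂ g), LieAlgebra.radical ℂ g⁆ ≤ (toEnd ℂ g W).ker := by
    rw [LieSubmodule.lieIdeal_oper_eq_span]
    rw [LieSubmodule.lieSpan_le]
    rintro z ⟨y, a, rfl⟩
    rw [SetLike.mem_coe, LieHom.mem_ker]
    ext u
    rw [LinearMap.zero_apply, toEnd_apply_apply, lie_lie, hscal a a.2 u,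
      hscal a a.2 ⁅(y : g), u⁆, lie_smul, sub_self]
  have hker : toEnd ℂ g W x = 0 := LieHom.mem_ker.mp (hle hx)
  have : toEnd ℂ g W x w = 0 := by rw [hker]; rfl
  rwa [toEnd_apply_apply] at this
end

section
/- Let h^ℝ be a Cartan subalgebra of g^ℝ with θ(h^ℝ) = h^ℝ, write h^ℝ = t^ℝ ⊕ a^ℝ with t^ℝ := {h ∈ h^ℝ : θ(h) = h} and a^ℝ := {h ∈ h^ℝ : θ(h) = -h}, let l^ℝ be the centralizer of a^ℝ in g^ℝ, and let l' := ⁅l^ℝ, l^ℝ⁆ be the derived subalgebra of l^ℝ. Then: (a) θ(l') = l'; (b) the restriction of θ to l' is a Cartan involution of l', i.e., -κ'(x, θ(x)) > 0 for every nonzero x ∈ l', where κ' denotes the Killing form of l'; (c) h^ℝ ∩ l' is a Cartan subalgebra of l' that is pointwise fixed by θ (in particular θ-stable), i.e., it is a compact θ-stable Cartan subalgebra of l'. -/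
noncomputable section

variable (g : Type*) [LieRing g] [LieAlgebra ℂ g]

/-- `g`, viewed as a Lie algebra over `ℝ` by restriction of scalars. -/
instance : LieAlgebra ℝ g where
  lie_smul t x y := by rw [← smul_one_smul ℂ t y, lie_smul, smul_one_smul]

/-- The real form `g^ℝ = {x | τ x = x}` of `g` determined by a conjugate-linear
involution `τ` preserving brackets, as a real Lie subalgebra of `g`. -/
def realForm (τ : g →ₗ⋆[ℂ] g) (hτbr : ∀ x y : g, τ ⁅x, y⁆ = ⁅τ x, τ y⁆) :
    LieSubalgebra ℝ g where
  carrier := {x | τ x = x}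
  add_mem' := fun {x y} hx hy => by
    simp only [Set.mem_setOf_eq] at *
    rw [map_add, hx, hy]
  zero_mem' := by simp
  smul_mem' := fun t x hx => by
    simp only [Set.mem_setOf_eq] at *
    rw [← smul_one_smul ℂ t x, map_smulₛₗ,
      show ((starRingEnd ℂ) (t • (1 : ℂ))) = t • (1 : ℂ) by simp, hx]
  lie_mem' := fun {x y} hx hy => by
    simp only [Set.mem_setOf_eq] at *
    rw [hτbr, hx, hy]

/-- The simultaneous eigenspace `g_α = {x | ⁅h, x⁆ = α(h) • x for all h ∈ H}` of a
`ℂ`-linear functional `α` on a Cartan subalgebra `H`. -/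
def rootSet (H : LieSubalgebra ℂ g) (α : ↥H →ₗ[ℂ] ℂ) : Set g :=
  {x | ∀ h : ↥H, ⁅(h : g), x⁆ = α h • x}

/-- The centralizer of a subset `s` of a real Lie algebra `L`, as a Lie subalgebra. -/
def lieCentralizer (L : Type*) [LieRing L] [LieAlgebra ℝ L] (s : Set L) :
    LieSubalgebra ℝ L where
  carrier := {x | ∀ y ∈ s, ⁅x, y⁆ = 0}
  add_mem' := fun {x y} hx hy z hz => by rw [add_lie, hx z hz, hy z hz, add_zero]
  zero_mem' := fun z _ => zero_lie z
  smul_mem' := fun t x hx z hz => by rw [smul_lie, hx z hz, smul_zero]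
  lie_mem' := fun {x y} hx hy z hz => by
    rw [lie_lie, hx z hz, hy z hz, lie_zero, lie_zero, sub_zero]

variable (τ : g →ₗ⋆[ℂ] g) (hτbr : ∀ x y : g, τ ⁅x, y⁆ = ⁅τ x, τ y⁆)
  (θ : g →ₗ[ℂ] g) (hR : LieSubalgebra ℝ ↥(realForm g τ hτbr))

/-- `l^ℝ`: the centralizer in `g^ℝ` of `a^ℝ`, where `a^ℝ` is the `-1` eigenspace of `θ`
on the Cartan subalgebra `h^ℝ` of `g^ℝ`. -/
def lPart : LieSubalgebra ℝ ↥(realForm g τ hτbr) :=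
  lieCentralizer ↥(realForm g τ hτbr)
    {x : ↥(realForm g τ hτbr) | x ∈ hR ∧ θ (x : g) = -(x : g)}

/-- `l' = ⁅l^ℝ, l^ℝ⁆`: the derived subalgebra of `l^ℝ`. -/
def lDer : LieIdeal ℝ ↥(lPart g τ hτbr θ hR) :=
  LieAlgebra.derivedSeries ℝ ↥(lPart g τ hτbr θ hR) 1

/-- The realization of elements of `l'` as elements of `g`. -/
def embDer (x : ↥(lDer g τ hτbr θ hR)) : g :=
  (((x : ↥(lPart g τ hτbr θ hR)) : ↥(realForm g τ hτbr)) : g)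



set_option linter.unusedSectionVars false

open LinearMap in
lemma keyTrace {V : Type*} [AddCommGroup V] [Module ℝ V] [FiniteDimensional ℝ V]
    (Φ : V →ₗ[ℝ] V →ₗ[ℝ] ℝ) (hsymm : ∀ u v, Φ u v = Φ v u)
    (hdef : ∀ v, v ≠ 0 → 0 < Φ v v)
    (A B : V →ₗ[ℝ] V) (hadj : ∀ u v, Φ (A u) v = -(Φ u (B v))) :
    LinearMap.trace ℝ V (A ∘ₗ B) ≤ 0 ∧ (LinearMap.trace ℝ V (A ∘ₗ B) = 0 → B = 0) := by
  have hnonneg : ∀ v, 0 ≤ Φ v v := by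
    intro v
    rcases eq_or_ne v 0 with rfl | hv
    · simp
    · exact (hdef v hv).le
  letI core : InnerProductSpace.Core ℝ V :=
    { inner := fun u v => Φ u v
      conj_inner_symm := fun u v => by simpa using hsymm v u
      re_inner_nonneg := fun v => by simpa using hnonneg v
      add_left := fun u v w => by simp
      smul_left := fun u v r => by simp
      definite := fun v hv => by
        by_contra h
        exact (hdef v h).ne' hv }
  letI : NormedAddCommGroup V := core.toNormedAddCommGroup
  letI : InnerProductSpace ℝ V := InnerProductSpace.ofCore core.toCore
  have hinner : ∀ u v : V, (inner ℝ u v : ℝ) = Φ u v := fun _ _ => rfl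
  obtain ⟨n, e⟩ : ∃ n, Nonempty (OrthonormalBasis (Fin n) ℝ V) :=
    ⟨_, ⟨stdOrthonormalBasis ℝ V⟩⟩
  obtain ⟨e⟩ := e
  have htr : ∀ T : V →ₗ[ℝ] V, LinearMap.trace ℝ V T = ∑ i, Φ (e i) (T (e i)) := by
    intro T
    rw [LinearMap.trace_eq_matrix_trace ℝ e.toBasis, Matrix.trace]
    congr 1
    ext i
    rw [Matrix.diag_apply, LinearMap.toMatrix_apply, e.coe_toBasis_repr_apply,
      e.repr_apply_apply, hinner, e.coe_toBasis]
  have hterm : ∀ i, Φ (e i) ((A ∘ₗ B) (e i)) = -(Φ (B (e i)) (B (e i))) := by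
    intro i
    rw [LinearMap.comp_apply, hsymm, hadj, hsymm]
  constructor
  · rw [htr]
    refine Finset.sum_nonpos fun i _ => ?_
    rw [hterm]
    simpa using hnonneg (B (e i))
  · intro h0
    have hsum : ∑ i, Φ (B (e i)) (B (e i)) = 0 := by
      have := (htr (A ∘ₗ B)).symm.trans h0
      rw [Finset.sum_congr rfl (fun i _ => hterm i)] at this
      simpa [Finset.sum_neg_distrib] using this
    have hzero : ∀ i, B (e i) = 0 := by
      have hall := (Finset.sum_eq_zero_iff_of_nonneg
        (fun i _ => hnonneg (B (e i)))).mp hsum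
      intro i
      by_contra h
      exact (hdef _ h).ne' (hall i (Finset.mem_univ i))
    apply e.toBasis.ext
    intro i
    simpa using hzero i

section Abstract

variable {L : Type*} [LieRing L] [LieAlgebra ℝ L] [FiniteDimensional ℝ L]

private def resForm (Φ : L →ₗ[ℝ] L →ₗ[ℝ] ℝ) {V : Type*} [AddCommGroup V] [Module ℝ V]
    (f : V →ₗ[ℝ] L) : V →ₗ[ℝ] V →ₗ[ℝ] ℝ :=
  LinearMap.mk₂ ℝ (fun u v => Φ (f u) (f v))
    (fun u u' v => by simp) (fun r u v => by simp) (fun u v v' => by simp)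
    (fun r u v => by simp)

private lemma cartan_abelian
    (σ : L →ₗ[ℝ] L) (hσ2 : ∀ x, σ (σ x) = x)
    (Φ : L →ₗ[ℝ] L →ₗ[ℝ] ℝ) (hΦsymm : ∀ u v, Φ u v = Φ v u)
    (hΦpos : ∀ v, v ≠ 0 → 0 < Φ v v)
    (hΦrel : ∀ z u v, Φ ⁅z, u⁆ v = -Φ u ⁅σ z, v⁆)
    (H : LieSubalgebra ℝ L) (hH : H.IsCartanSubalgebra) (hHσ : ∀ x ∈ H, σ x ∈ H) :
    ∀ x y : L, x ∈ H → y ∈ H → ⁅x, y⁆ = 0 := by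
  haveI : FiniteDimensional ℝ ↥H := inferInstanceAs (FiniteDimensional ℝ ↥H.toSubmodule)
  haveI : LieRing.IsNilpotent ↥H := hH.nilpotent
  -- the restricted form on H
  set ΦH : ↥H →ₗ[ℝ] ↥H →ₗ[ℝ] ℝ := resForm Φ H.toSubmodule.subtype with hΦH
  have hΦHsymm : ∀ u v : ↥H, ΦH u v = ΦH v u := fun u v => hΦsymm _ _
  have hΦHpos : ∀ v : ↥H, v ≠ 0 → 0 < ΦH v v := by
    intro v hv
    refine hΦpos _ fun h0 => hv (Subtype.ext ?_)
    rw [ZeroMemClass.coe_zero]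
    exact h0
  -- key step: for z in H with σ z = ε z, ad z vanishes on H
  have key : ∀ (z : ↥H) (ε : ℝ), (ε = 1 ∨ ε = -1) → σ (z : L) = ε • (z : L) →
      LieAlgebra.ad ℝ ↥H z = 0 := by
    intro z ε hε hz
    set A := LieAlgebra.ad ℝ ↥H z with hA
    have hnil : IsNilpotent A := LieModule.isNilpotent_toEnd_of_isNilpotent ℝ ↥H ↥H z
    have htr : LinearMap.trace ℝ ↥H (A ∘ₗ A) = 0 := by
      have h2 : IsNilpotent (A * A) := (Commute.refl A).isNilpotent_mul_left hnil
      have := LinearMap.isNilpotent_trace_of_isNilpotent h2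
      simpa [Module.End.mul_eq_comp] using this.eq_zero
    have hadj : ∀ u v : ↥H, ΦH (A u) v = -(ΦH u ((ε • A) v)) := by
      intro u v
      have hAu : ((A u : ↥H) : L) = ⁅(z : L), (u : L)⁆ := by
        simp [hA, LieSubalgebra.coe_bracket]
      have hAv0 : ((A v : ↥H) : L) = ⁅(z : L), (v : L)⁆ := by
        simp [hA, LieSubalgebra.coe_bracket]
      have hAv : (((ε • A) v : ↥H) : L) = ε • ⁅(z : L), (v : L)⁆ := by
        rw [← hAv0]; rfl
      show Φ ((A u : ↥H) : L) ((v : ↥H) : L) = -(Φ ((u : ↥H) : L) (((ε • A) v : ↥H) : L))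
      rw [hAu, hAv, hΦrel, hz, smul_lie]
    have hkey := keyTrace ΦH hΦHsymm hΦHpos A (ε • A) hadj
    have htr2 : LinearMap.trace ℝ ↥H (A ∘ₗ (ε • A)) = 0 := by
      have : A ∘ₗ (ε • A) = ε • (A ∘ₗ A) := by
        ext u; simp
      rw [this, map_smul, htr, smul_zero]
    have hB0 : ε • A = 0 := hkey.2 htr2
    rcases hε with rfl | rfl
    · simpa using hB0
    · have := congrArg (fun f => (-1 : ℝ) • f) hB0
      simpa using this
  intro x y hx hy
  -- decompose x = t + a
  set t : L := (1/2 : ℝ) • (x + σ x) with ht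
  set a : L := (1/2 : ℝ) • (x - σ x) with ha
  have htH : t ∈ H := H.smul_mem _ (H.add_mem hx (hHσ x hx))
  have haH : a ∈ H := H.smul_mem _ (H.sub_mem hx (hHσ x hx))
  have hta : t + a = x := by
    rw [ht, ha, ← smul_add]
    have : x + σ x + (x - σ x) = (2 : ℝ) • x := by
      rw [two_smul]; abel
    rw [this, smul_smul]
    norm_num
  have hσt : σ t = (1 : ℝ) • t := by
    simp only [ht, map_smul, map_add, hσ2, one_smul]
    rw [add_comm]
  have hσa : σ a = (-1 : ℝ) • a := by
    simp only [ha, map_smul, map_sub, hσ2]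
    rw [smul_comm]
    congr 1
    rw [neg_smul, one_smul, neg_sub]
  have hadt := key ⟨t, htH⟩ 1 (Or.inl rfl) (by simpa using hσt)
  have hada := key ⟨a, haH⟩ (-1) (Or.inr rfl) (by simpa using hσa)
  have hbr : ∀ w : L, ∀ hw : w ∈ H, LieAlgebra.ad ℝ ↥H ⟨w, hw⟩ = 0 → ⁅w, y⁆ = 0 := by
    intro w hw h0
    have := DFunLike.congr_fun h0 (⟨y, hy⟩ : ↥H)
    have h2 : (⁅(⟨w, hw⟩ : ↥H), (⟨y, hy⟩ : ↥H)⁆ : ↥H) = 0 := this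
    have h3 := congrArg (fun u : ↥H => (u : L)) h2
    simpa [LieSubalgebra.coe_bracket] using h3
  have h1 : ⁅t, y⁆ = 0 := hbr t htH hadt
  have h2 : ⁅a, y⁆ = 0 := hbr a haH hada
  rw [← hta, add_lie, h1, h2, add_zero]

set_option maxHeartbeats 1000000 in
theorem abstract18
    (σ : L →ₗ[ℝ] L) (hσ2 : ∀ x, σ (σ x) = x) (hσbr : ∀ x y, σ ⁅x, y⁆ = ⁅σ x, σ y⁆)
    (Φ : L →ₗ[ℝ] L →ₗ[ℝ] ℝ) (hΦsymm : ∀ u v, Φ u v = Φ v u)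
    (hΦpos : ∀ v, v ≠ 0 → 0 < Φ v v)
    (hΦrel : ∀ z u v, Φ ⁅z, u⁆ v = -Φ u ⁅σ z, v⁆)
    (hΦσ : ∀ u v, Φ (σ u) (σ v) = Φ u v)
    (H : LieSubalgebra ℝ L) (hH : H.IsCartanSubalgebra) (hHσ : ∀ x ∈ H, σ x ∈ H)
    (S : Set L) (hS : ∀ x, x ∈ S ↔ x ∈ H ∧ σ x = -x)
    (C : LieSubalgebra ℝ L) (hCmem : ∀ x, x ∈ C ↔ ∀ s ∈ S, ⁅x, s⁆ = 0)
    (Dv : LieIdeal ℝ ↥C) (hDv : Dv = LieAlgebra.derivedSeries ℝ ↥C 1) :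
    (∀ x : ↥Dv, ∃ y : ↥Dv, ((y : ↥C) : L) = σ ((x : ↥C) : L)) ∧
    (∀ x y : ↥Dv, ((y : ↥C) : L) = σ ((x : ↥C) : L) → x ≠ 0 →
      0 < -(killingForm ℝ ↥Dv x y)) ∧
    (∃ hc : LieSubalgebra ℝ ↥Dv, hc.IsCartanSubalgebra ∧
      (∀ x : ↥Dv, x ∈ hc ↔ ((x : ↥C) : L) ∈ H) ∧
      (∀ x : ↥Dv, x ∈ hc → σ ((x : ↥C) : L) = ((x : ↥C) : L))) := by
  haveI : FiniteDimensional ℝ ↥C := inferInstanceAs (FiniteDimensional ℝ ↥C.toSubmodule)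
  haveI : FiniteDimensional ℝ ↥Dv := inferInstanceAs (FiniteDimensional ℝ ↥Dv.toSubmodule)
  -- H is abelian
  have hHab : ∀ x y : L, x ∈ H → y ∈ H → ⁅x, y⁆ = 0 :=
    cartan_abelian σ hσ2 Φ hΦsymm hΦpos hΦrel H hH hHσ
  have hSH : ∀ s ∈ S, s ∈ H := fun s hs => ((hS s).1 hs).1
  have hHC : ∀ x ∈ H, x ∈ C := fun x hx => (hCmem x).2 fun s hs => hHab x s hx (hSH s hs)
  have hmemC : ∀ x : L, x ∈ C → ∀ s ∈ S, ⁅x, s⁆ = 0 := fun x hx => (hCmem x).1 hx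
  -- σ preserves C
  have hσC : ∀ x ∈ C, σ x ∈ C := by
    intro x hx
    rw [hCmem]
    intro s hs
    have hσs : σ s = -s := ((hS s).1 hs).2
    have h1 : s = -σ s := by rw [hσs, neg_neg]
    rw [h1, lie_neg, ← hσbr, hmemC x hx s hs, map_zero, neg_zero]
  -- σ as a map on C
  set σC : ↥C → ↥C := fun p => ⟨σ (p : L), hσC _ p.2⟩ with hσCdef
  have hσCcoe : ∀ p : ↥C, ((σC p : ↥C) : L) = σ (p : L) := fun p => rfl
  have hσC2 : ∀ p, σC (σC p) = p := fun p => Subtype.ext (hσ2 _)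
  have hσCadd : ∀ p q, σC (p + q) = σC p + σC q := fun p q =>
    Subtype.ext (map_add σ (p : L) (q : L))
  have hσCsmul : ∀ (r : ℝ) p, σC (r • p) = r • σC p := fun r p =>
    Subtype.ext (map_smul σ r (p : L))
  have hσCzero : σC 0 = 0 := Subtype.ext (map_zero σ)
  have hσCbr : ∀ p q, σC ⁅p, q⁆ = ⁅σC p, σC q⁆ := fun p q => Subtype.ext (by
    simp only [hσCdef, LieSubalgebra.coe_bracket, hσbr])
  -- the form on C
  set ΦC : ↥C →ₗ[ℝ] ↥C →ₗ[ℝ] ℝ := resForm Φ C.toSubmodule.subtype with hΦCdef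
  have hΦCapp : ∀ u v : ↥C, ΦC u v = Φ (u : L) (v : L) := fun u v => rfl
  have hΦCsymm : ∀ u v : ↥C, ΦC u v = ΦC v u := fun u v => hΦsymm _ _
  have hΦCpos : ∀ v : ↥C, v ≠ 0 → 0 < ΦC v v := by
    intro v hv
    refine hΦpos _ fun h0 => hv (Subtype.ext ?_)
    rw [ZeroMemClass.coe_zero]; exact h0
  have hΦCrel : ∀ z u v : ↥C, ΦC ⁅z, u⁆ v = -ΦC u ⁅σC z, v⁆ := by
    intro z u v
    rw [hΦCapp, hΦCapp, LieSubalgebra.coe_bracket, LieSubalgebra.coe_bracket, hσCcoe]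
    exact hΦrel _ _ _
  -- derived series facts
  have hDvbr : ∀ x n : ↥C, ⁅x, n⁆ ∈ Dv := by
    intro x n
    rw [hDv, LieAlgebra.derivedSeries_def, LieAlgebra.derivedSeriesOfIdeal_succ,
      LieAlgebra.derivedSeriesOfIdeal_zero]
    exact LieSubmodule.lie_mem_lie (LieSubmodule.mem_top x) (LieSubmodule.mem_top n)
  have hDvspan : (Dv : Submodule ℝ ↥C) =
      Submodule.span ℝ {m : ↥C | ∃ x ∈ (⊤ : LieIdeal ℝ ↥C), ∃ n ∈ (⊤ : LieIdeal ℝ ↥C),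
        ⁅x, n⁆ = m} := by
    rw [hDv, LieAlgebra.derivedSeries_def, LieAlgebra.derivedSeriesOfIdeal_succ,
      LieAlgebra.derivedSeriesOfIdeal_zero]
    exact LieSubmodule.lieIdeal_oper_eq_linear_span' ..
  -- a generic induction principle for membership in Dv
  have hDvind : ∀ (p : ↥C → Prop), p 0 → (∀ a b : ↥C, p a → p b → p (a + b)) →
      (∀ (r : ℝ) (a : ↥C), p a → p (r • a)) → (∀ a b : ↥C, p ⁅a, b⁆) →
      ∀ m : ↥C, m ∈ Dv → p m := by
    intro p h0 hadd hsmul hbr m hm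
    have hm' : m ∈ (Dv : Submodule ℝ ↥C) := hm
    rw [hDvspan] at hm'
    clear hm
    induction hm' using Submodule.span_induction with
    | mem y hy => obtain ⟨a, -, b, -, rfl⟩ := hy; exact hbr a b
    | zero => exact h0
    | add a b _ _ ha hb => exact hadd a b ha hb
    | smul r a _ ha => exact hsmul r a ha
  -- σ preserves Dv
  have hσDv : ∀ p : ↥C, p ∈ Dv → σC p ∈ Dv := by
    intro p hp
    refine hDvind (fun m => σC m ∈ Dv) ?_ ?_ ?_ ?_ p hp
    · show σC 0 ∈ Dv
      rw [hσCzero]; exact Dv.zero_mem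
    · intro a b ha hb
      show σC (a + b) ∈ Dv
      rw [hσCadd]; exact Dv.add_mem ha hb
    · intro r a ha
      show σC (r • a) ∈ Dv
      rw [hσCsmul]; exact Dv.smul_mem r ha
    · intro a b
      show σC ⁅a, b⁆ ∈ Dv
      rw [hσCbr]; exact hDvbr _ _
  -- center property: an element of Dv that is Dv-central vanishes
  have hcenter : ∀ c : ↥Dv, (∀ d : ↥Dv, ⁅c, d⁆ = 0) → c = 0 := by
    intro c hc
    set cP : ↥C := (c : ↥C) with hcP
    have hcDv : cP ∈ Dv := c.2
    -- ad cP kills Dv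
    have hkill : ∀ m : ↥C, m ∈ Dv → ⁅cP, m⁆ = 0 := by
      intro m hm
      have := hc ⟨m, hm⟩
      have h2 := congrArg (fun u : ↥Dv => (u : ↥C)) this
      simpa using h2
    -- trace of ad cP ∘ ad (σC cP) is zero
    have hcomp : (LieAlgebra.ad ℝ ↥C cP) ∘ₗ (LieAlgebra.ad ℝ ↥C (σC cP)) = 0 := by
      apply LinearMap.ext
      intro u
      show ⁅cP, ⁅σC cP, u⁆⁆ = (0 : ↥C)
      exact hkill _ (hDvbr _ _)
    have hadj : ∀ u v : ↥C, ΦC ((LieAlgebra.ad ℝ ↥C cP) u) v =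
        -(ΦC u ((LieAlgebra.ad ℝ ↥C (σC cP)) v)) := fun u v => hΦCrel cP u v
    have hkey := keyTrace ΦC hΦCsymm hΦCpos _ _ hadj
    have hB := hkey.2 (by rw [hcomp, map_zero])
    -- σC cP is central in C
    have hcent : ∀ q : ↥C, ⁅σC cP, q⁆ = 0 := fun q => DFunLike.congr_fun hB q
    -- Φ c c = 0
    have hzero : ∀ m : ↥C, m ∈ Dv → ΦC m cP = 0 := by
      refine hDvind (fun m => ΦC m cP = 0) ?_ ?_ ?_ ?_
      · show ΦC 0 cP = 0
        simp
      · intro a b ha hb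
        show ΦC (a + b) cP = 0
        rw [map_add, LinearMap.add_apply, ha, hb, add_zero]
      · intro r a ha
        show ΦC (r • a) cP = 0
        rw [map_smul, LinearMap.smul_apply, ha, smul_zero]
      · intro a b
        show ΦC ⁅a, b⁆ cP = 0
        rw [hΦCrel]
        have : ⁅σC a, cP⁆ = 0 := by
          have h1 : cP = σC (σC cP) := (hσC2 cP).symm
          rw [h1, ← hσCbr]
          have h2 : ⁅a, σC cP⁆ = 0 := by rw [← lie_skew, hcent, neg_zero]
          rw [h2, hσCzero]
        rw [this, map_zero, neg_zero]
    have hΦcc : ΦC cP cP = 0 := hzero cP hcDv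
    have hcP0 : cP = 0 := by
      by_contra h
      exact (hΦCpos cP h).ne' hΦcc
    exact Subtype.ext hcP0
  -- the三 parts
  refine ⟨?_, ?_, ?_⟩
  · -- (a)
    intro x
    exact ⟨⟨σC (x : ↥C), hσDv _ x.2⟩, rfl⟩
  · -- (b)
    intro x y hxy hx0
    have hyx : (y : ↥C) = σC (x : ↥C) := Subtype.ext hxy
    -- the form on Dv
    set ΦD : ↥Dv →ₗ[ℝ] ↥Dv →ₗ[ℝ] ℝ :=
      resForm Φ (C.toSubmodule.subtype ∘ₗ Dv.toSubmodule.subtype) with hΦDdef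
    have hΦDapp : ∀ u v : ↥Dv, ΦD u v = Φ ((u : ↥C) : L) ((v : ↥C) : L) := fun u v => rfl
    have hΦDsymm : ∀ u v : ↥Dv, ΦD u v = ΦD v u := fun u v => hΦsymm _ _
    have hΦDpos : ∀ v : ↥Dv, v ≠ 0 → 0 < ΦD v v := by
      intro v hv
      refine hΦpos _ fun h0 => hv (Subtype.ext (Subtype.ext ?_))
      rw [ZeroMemClass.coe_zero, ZeroMemClass.coe_zero]; exact h0
    have hadj : ∀ u v : ↥Dv, ΦD ((LieAlgebra.ad ℝ ↥Dv x) u) v =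
        -(ΦD u ((LieAlgebra.ad ℝ ↥Dv y) v)) := by
      intro u v
      have h1 : ΦD ⁅x, u⁆ v = ΦC ⁅(x : ↥C), (u : ↥C)⁆ (v : ↥C) := rfl
      have h2 : ΦD u ⁅y, v⁆ = ΦC (u : ↥C) ⁅(y : ↥C), (v : ↥C)⁆ := rfl
      show ΦD ⁅x, u⁆ v = -(ΦD u ⁅y, v⁆)
      rw [h1, h2, hyx]
      exact hΦCrel _ _ _
    have hkey := keyTrace ΦD hΦDsymm hΦDpos _ _ hadj
    have hkf : killingForm ℝ ↥Dv x y =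
        LinearMap.trace ℝ ↥Dv ((LieAlgebra.ad ℝ ↥Dv x) ∘ₗ (LieAlgebra.ad ℝ ↥Dv y)) :=
      killingForm_apply_apply ℝ ↥Dv x y
    have hne : LinearMap.trace ℝ ↥Dv
        ((LieAlgebra.ad ℝ ↥Dv x) ∘ₗ (LieAlgebra.ad ℝ ↥Dv y)) ≠ 0 := by
      intro h0
      have hady : LieAlgebra.ad ℝ ↥Dv y = 0 := hkey.2 h0
      have hycent : ∀ d : ↥Dv, ⁅y, d⁆ = 0 := fun d => DFunLike.congr_fun hady d
      have hy0 : y = 0 := hcenter y hycent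
      apply hx0
      have : (x : ↥C) = σC (σC (x : ↥C)) := (hσC2 _).symm
      rw [← hyx] at this
      apply Subtype.ext
      rw [this, hy0]
      show σC 0 = 0
      exact hσCzero
    have hlt := lt_of_le_of_ne hkey.1 hne
    rw [hkf]
    linarith
  · -- (c)
    set hc : LieSubalgebra ℝ ↥Dv :=
      { carrier := {x : ↥Dv | ((x : ↥C) : L) ∈ H}
        add_mem' := fun {a b} ha hb => H.add_mem ha hb
        zero_mem' := H.zero_mem
        smul_mem' := fun r a ha => H.smul_mem r ha
        lie_mem' := fun {a b} ha hb => H.lie_mem ha hb } with hhc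
    have hmemhc : ∀ x : ↥Dv, x ∈ hc ↔ ((x : ↥C) : L) ∈ H := fun x => Iff.rfl
    -- hc is abelian, hence nilpotent
    haveI habel : IsLieAbelian ↥hc := by
      constructor
      intro a b
      apply Subtype.ext
      apply Subtype.ext
      apply Subtype.ext
      show ⁅(((a : ↥Dv) : ↥C) : L), (((b : ↥Dv) : ↥C) : L)⁆ = 0
      exact hHab _ _ a.2 b.2
    haveI hnilp : LieRing.IsNilpotent ↥hc := inferInstance
    -- decomposition of C into central part plus Dv
    have hdecomp : ∀ p : ↥C, ∃ z d : ↥C, (∀ q : ↥C, ⁅z, q⁆ = 0) ∧ d ∈ Dv ∧ p = z + d := by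
      letI core : InnerProductSpace.Core ℝ ↥C :=
        { inner := fun u v => ΦC u v
          conj_inner_symm := fun u v => by simpa using hΦCsymm v u
          re_inner_nonneg := fun v => by
            rcases eq_or_ne v 0 with rfl | hv
            · simp
            · simpa using (hΦCpos v hv).le
          add_left := fun u v w => by simp
          smul_left := fun u v r => by simp
          definite := fun v hv => by
            by_contra h
            exact (hΦCpos v h).ne' hv }
      letI : NormedAddCommGroup ↥C := core.toNormedAddCommGroup
      letI : InnerProductSpace ℝ ↥C := InnerProductSpace.ofCore core.toCore
      set K : Submodule ℝ ↥C := Dv.toSubmodule with hK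
      have horth : ∀ z ∈ Kᗮ, ∀ q : ↥C, ⁅z, q⁆ = 0 := by
        intro z hz q
        have h1 : ∀ a u : ↥C, ΦC u ⁅σC a, z⁆ = 0 := by
          intro a u
          have h0 : ΦC ⁅a, u⁆ z = 0 := (Submodule.mem_orthogonal K z).1 hz _ (hDvbr a u)
          have h2 := hΦCrel a u z
          rw [h0] at h2
          linarith [h2]
        have h2 : ∀ a : ↥C, ⁅σC a, z⁆ = 0 := by
          intro a
          by_contra h
          exact (hΦCpos _ h).ne' (h1 a _)
        have h3 : ⁅q, z⁆ = 0 := by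
          have := h2 (σC q)
          rwa [hσC2] at this
        rw [← lie_skew, h3, neg_zero]
      haveI : CompleteSpace K := FiniteDimensional.complete ℝ K
      have hsup : K ⊔ Kᗮ = ⊤ := Submodule.sup_orthogonal_of_hasOrthogonalProjection
      intro p
      have hp : p ∈ K ⊔ Kᗮ := by rw [hsup]; exact Submodule.mem_top
      obtain ⟨d, hd, z, hz, hpzd⟩ := Submodule.mem_sup.1 hp
      exact ⟨z, d, horth z hz, hd, by rw [← hpzd]; abel⟩
    -- central elements of C lie in H
    have hzH : ∀ z : ↥C, (∀ q : ↥C, ⁅z, q⁆ = 0) → (z : L) ∈ H := by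
      intro z hzc
      have hn : (z : L) ∈ H.normalizer := by
        rw [LieSubalgebra.mem_normalizer_iff]
        intro y hy
        have h0 : ⁅z, (⟨y, hHC y hy⟩ : ↥C)⁆ = 0 := hzc _
        have h1 : ⁅(z : L), y⁆ = 0 := by
          have := congrArg (fun u : ↥C => (u : L)) h0
          simpa using this
        rw [h1]
        exact H.zero_mem
      rwa [hH.self_normalizing] at hn
    -- hc is self-normalizing
    have hnorm : hc.normalizer = hc := by
      refine le_antisymm ?_ hc.le_normalizer
      intro x hx
      rw [LieSubalgebra.mem_normalizer_iff] at hx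
      show ((x : ↥C) : L) ∈ H
      have hxH : ((x : ↥C) : L) ∈ H.normalizer := by
        rw [LieSubalgebra.mem_normalizer_iff]
        intro k hk
        obtain ⟨z, d, hzc, hdDv, hkzd⟩ := hdecomp ⟨k, hHC k hk⟩
        have hk' : k = (z : L) + (d : L) := by
          have := congrArg (fun u : ↥C => (u : L)) hkzd
          simpa using this
        have hzH' : (z : L) ∈ H := hzH z hzc
        have hdH : (d : L) ∈ H := by
          have : (d : L) = k - (z : L) := by rw [hk']; abel
          rw [this]
          exact H.sub_mem hk hzH'
        have hdhc : (⟨d, hdDv⟩ : ↥Dv) ∈ hc := hdH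
        have hbr2 : ⁅x, (⟨d, hdDv⟩ : ↥Dv)⁆ ∈ hc := hx _ hdhc
        have hxd : ⁅((x : ↥C) : L), (d : L)⁆ ∈ H := hbr2
        have hxz : ⁅((x : ↥C) : L), (z : L)⁆ = 0 := by
          have h0 : ⁅(x : ↥C), z⁆ = (0 : ↥C) := by
            rw [← lie_skew, hzc, neg_zero]
          have := congrArg (fun u : ↥C => (u : L)) h0
          simpa using this
        rw [hk', lie_add, hxz, zero_add]
        exact hxd
      rwa [hH.self_normalizing] at hxH
    -- σ fixes hc pointwise
    have hfix : ∀ x : ↥Dv, x ∈ hc → σ ((x : ↥C) : L) = ((x : ↥C) : L) := by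
      intro x hxhc
      set h0 : L := ((x : ↥C) : L) with hh0
      have hh0H : h0 ∈ H := hxhc
      set t : L := (1/2 : ℝ) • (h0 + σ h0) with ht
      set a : L := (1/2 : ℝ) • (h0 - σ h0) with ha
      have htH : t ∈ H := H.smul_mem _ (H.add_mem hh0H (hHσ _ hh0H))
      have haH : a ∈ H := H.smul_mem _ (H.sub_mem hh0H (hHσ _ hh0H))
      have hta : t + a = h0 := by
        rw [ht, ha, ← smul_add]
        have : h0 + σ h0 + (h0 - σ h0) = (2 : ℝ) • h0 := by rw [two_smul]; abel
        rw [this, smul_smul]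
        norm_num
      have hσt : σ t = t := by
        simp only [ht, map_smul, map_add, hσ2]
        rw [add_comm]
      have hσa : σ a = -a := by
        simp only [ha, map_smul, map_sub, hσ2]
        rw [← smul_neg]
        congr 1
        abel
      have haS : a ∈ S := (hS a).2 ⟨haH, hσa⟩
      set aP : ↥C := ⟨a, hHC a haH⟩ with haP
      have hacent : ∀ q : ↥C, ⁅aP, q⁆ = 0 := by
        intro q
        apply Subtype.ext
        show ⁅a, (q : L)⁆ = 0
        rw [← lie_skew, hmemC _ q.2 a haS, neg_zero]
      have horthA : ∀ m : ↥C, m ∈ Dv → ΦC aP m = 0 := by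
        refine hDvind (fun m => ΦC aP m = 0) ?_ ?_ ?_ ?_
        · show ΦC aP 0 = 0
          simp
        · intro u v hu hv
          show ΦC aP (u + v) = 0
          rw [map_add, hu, hv, add_zero]
        · intro r u hu
          show ΦC aP (r • u) = 0
          rw [map_smul, hu, smul_zero]
        · intro u v
          show ΦC aP ⁅u, v⁆ = 0
          rw [hΦCsymm, hΦCrel]
          have hz : ⁅σC u, aP⁆ = 0 := by
            rw [← lie_skew, hacent, neg_zero]
          rw [hz, map_zero, neg_zero]
      have hat : Φ a t = 0 := by
        have h1 : Φ (σ a) (σ t) = Φ a t := hΦσ a t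
        rw [hσa, hσt, map_neg, LinearMap.neg_apply] at h1
        linarith [h1]
      have h3 : Φ a h0 = 0 := horthA (x : ↥C) x.2
      have h4 : Φ a h0 = Φ a t + Φ a a := by
        rw [← hta, map_add]
      have h6 : Φ a a = 0 := by
        rw [h4, hat, zero_add] at h3
        exact h3
      have ha0 : a = 0 := by
        by_contra h
        exact (hΦpos a h).ne' h6
      have h7 : h0 - σ h0 = 0 := by
        rcases smul_eq_zero.1 (ha.symm.trans ha0) with h | h
        · norm_num at h
        · exact h
      have := sub_eq_zero.1 h7
      exact this.symm
    exact ⟨hc, ⟨hnilp, hnorm⟩, hmemhc, hfix⟩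

end Abstract

/-- Let `g` be a complex semisimple Lie algebra with real form `g^ℝ`
and Cartan involution `θ`, let `h^ℝ = t^ℝ ⊕ a^ℝ` be a `θ`-stable Cartan subalgebra of
`g^ℝ`, let `l^ℝ` be the centralizer of `a^ℝ` in `g^ℝ`, and let `l' = ⁅l^ℝ, l^ℝ⁆`.
Then (a) `θ(l') = l'`; (b) `θ` restricts to a Cartan involution of `l'`, i.e.
`-κ'(x, θ x) > 0` for nonzero `x ∈ l'`, where `κ'` is the Killing form of `l'`; and
(c) `h^ℝ ∩ l'` is a compact `θ`-stable Cartan subalgebra of `l'`. -/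
theorem statement18 [FiniteDimensional ℂ g] [LieAlgebra.IsSemisimple ℂ g]
    (hτ2 : ∀ x, τ (τ x) = x)
    (hθ2 : ∀ x, θ (θ x) = x)
    (hθbr : ∀ x y : g, θ ⁅x, y⁆ = ⁅θ x, θ y⁆)
    (hθτ : ∀ x, θ (τ x) = τ (θ x))
    (hreal : ∀ x y : g, τ x = x → τ y = y → (-(killingForm ℂ g x (θ y))).im = 0)
    (hpos : ∀ x : g, τ x = x → x ≠ 0 → 0 < (-(killingForm ℂ g x (θ x))).re)
    (hRcartan : hR.IsCartanSubalgebra)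
    (hRstable : ∀ x : ↥(realForm g τ hτbr), x ∈ hR →
        ∃ y : ↥(realForm g τ hτbr), y ∈ hR ∧ θ (x : g) = (y : g)) :
    -- (a) `θ(l') = l'`
    ⇑θ '' Set.range (embDer g τ hτbr θ hR) = Set.range (embDer g τ hτbr θ hR) ∧
    -- (b) `θ` restricted to `l'` is a Cartan involution: `-κ'(x, θ(x)) > 0` for `x ≠ 0`
    (∀ x y : ↥(lDer g τ hτbr θ hR),
        θ (embDer g τ hτbr θ hR x) = embDer g τ hτbr θ hR y → x ≠ 0 →
        0 < -(killingForm ℝ ↥(lDer g τ hτbr θ hR) x y)) ∧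
    -- (c) `h^ℝ ∩ l'` is a compact `θ`-stable Cartan subalgebra of `l'`
    (∃ hC : LieSubalgebra ℝ ↥(lDer g τ hτbr θ hR), hC.IsCartanSubalgebra ∧
        embDer g τ hτbr θ hR '' (hC : Set ↥(lDer g τ hτbr θ hR))
          = (Subtype.val '' (hR : Set ↥(realForm g τ hτbr)))
              ∩ Set.range (embDer g τ hτbr θ hR) ∧
        (∀ x : ↥(lDer g τ hτbr θ hR), x ∈ hC →
            θ (embDer g τ hτbr θ hR x) = embDer g τ hτbr θ hR x)) := by
  classical
  -- abbreviations
  haveI : FiniteDimensional ℝ g := inferInstance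
  haveI : FiniteDimensional ℝ ↥(realForm g τ hτbr) :=
    inferInstanceAs (FiniteDimensional ℝ ↥(realForm g τ hτbr).toSubmodule)
  -- θ preserves the real form
  have hθmem : ∀ x : g, x ∈ realForm g τ hτbr → θ x ∈ realForm g τ hτbr := by
    intro x hx
    have hx' : τ x = x := hx
    show τ (θ x) = θ x
    rw [← hθτ, hx']
  -- θ as an ℝ-linear map on the real form
  set σ : ↥(realForm g τ hτbr) →ₗ[ℝ] ↥(realForm g τ hτbr) :=
    { toFun := fun x => ⟨θ (x : g), hθmem _ x.2⟩
      map_add' := fun x y => Subtype.ext (by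
        show θ ((x : g) + (y : g)) = θ (x : g) + θ (y : g)
        rw [map_add])
      map_smul' := fun r x => Subtype.ext (by
        show θ (r • (x : g)) = r • θ (x : g)
        rw [LinearMap.map_smul_of_tower]) } with hσdef
  have hσcoe : ∀ x : ↥(realForm g τ hτbr), ((σ x : ↥(realForm g τ hτbr)) : g) = θ (x : g) :=
    fun x => rfl
  have hσ2 : ∀ x, σ (σ x) = x := fun x => Subtype.ext (hθ2 (x : g))
  have hσbr : ∀ x y, σ ⁅x, y⁆ = ⁅σ x, σ y⁆ := by
    intro x y
    apply Subtype.ext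
    show θ (((⁅x, y⁆ : ↥(realForm g τ hτbr))) : g) = ⁅θ (x : g), θ (y : g)⁆
    rw [LieSubalgebra.coe_bracket, hθbr]
  -- invariance of the Killing form under θ
  have hθθ : θ ∘ₗ θ = LinearMap.id := LinearMap.ext hθ2
  have hadθ : ∀ x : g, LieAlgebra.ad ℂ g (θ x) = θ ∘ₗ (LieAlgebra.ad ℂ g x) ∘ₗ θ := by
    intro x
    apply LinearMap.ext
    intro v
    show ⁅θ x, v⁆ = θ ⁅x, θ v⁆
    rw [hθbr, hθ2]
  have hkθ : ∀ x y : g, killingForm ℂ g (θ x) (θ y) = killingForm ℂ g x y := by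
    intro x y
    rw [killingForm_apply_apply, killingForm_apply_apply, hadθ, hadθ]
    have hcomp : (θ ∘ₗ (LieAlgebra.ad ℂ g x) ∘ₗ θ) ∘ₗ (θ ∘ₗ (LieAlgebra.ad ℂ g y) ∘ₗ θ)
        = θ ∘ₗ ((LieAlgebra.ad ℂ g x) ∘ₗ (LieAlgebra.ad ℂ g y)) ∘ₗ θ := by
      apply LinearMap.ext
      intro v
      simp [hθ2]
    rw [hcomp, LinearMap.trace_comp_comm', LinearMap.comp_assoc, hθθ, LinearMap.comp_id]
  have hksymm : ∀ x y : g, killingForm ℂ g x y = killingForm ℂ g y x :=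
    fun x y => LieModule.traceForm_comm ℂ g g x y
  have hkinv : ∀ z u w : g, killingForm ℂ g ⁅z, u⁆ w = -killingForm ℂ g u ⁅z, w⁆ := by
    intro z u w
    rw [← lie_skew z u, map_neg, LinearMap.neg_apply,
      LieModule.traceForm_apply_lie_apply]
  -- the positive definite form on the real form
  set Φ : ↥(realForm g τ hτbr) →ₗ[ℝ] ↥(realForm g τ hτbr) →ₗ[ℝ] ℝ :=
    LinearMap.mk₂ ℝ (fun u v => (-(killingForm ℂ g (u : g) (θ (v : g)))).re)
      (fun u u' v => by
        show (-(killingForm ℂ g ((u : g) + (u' : g)) (θ (v : g)))).re = _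
        rw [map_add, LinearMap.add_apply, neg_add]
        exact Complex.add_re _ _)
      (fun r u v => by
        show (-(killingForm ℂ g (r • (u : g)) (θ (v : g)))).re = _
        rw [LinearMap.map_smul_of_tower, LinearMap.smul_apply, ← smul_neg, Complex.smul_re])
      (fun u v v' => by
        show (-(killingForm ℂ g (u : g) (θ ((v : g) + (v' : g))))).re = _
        rw [map_add, map_add, neg_add]
        exact Complex.add_re _ _)
      (fun r u v => by
        show (-(killingForm ℂ g (u : g) (θ (r • (v : g))))).re = _
        rw [LinearMap.map_smul_of_tower, LinearMap.map_smul_of_tower, ← smul_neg,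
          Complex.smul_re]) with hΦdef
  have hΦapp : ∀ u v : ↥(realForm g τ hτbr),
      Φ u v = (-(killingForm ℂ g (u : g) (θ (v : g)))).re := fun u v => rfl
  have hΦsymm : ∀ u v, Φ u v = Φ v u := by
    intro u v
    rw [hΦapp, hΦapp]
    congr 2
    calc killingForm ℂ g (u : g) (θ (v : g))
        = killingForm ℂ g (θ (u : g)) (θ (θ (v : g))) := (hkθ _ _).symm
      _ = killingForm ℂ g (θ (u : g)) (v : g) := by rw [hθ2]
      _ = killingForm ℂ g (v : g) (θ (u : g)) := hksymm _ _
  have hΦpos : ∀ v, v ≠ 0 → 0 < Φ v v := by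
    intro v hv
    refine hpos (v : g) v.2 fun h0 => hv (Subtype.ext ?_)
    rw [ZeroMemClass.coe_zero]
    exact h0
  have hΦrel : ∀ z u v, Φ ⁅z, u⁆ v = -Φ u ⁅σ z, v⁆ := by
    intro z u v
    rw [hΦapp, hΦapp, LieSubalgebra.coe_bracket, LieSubalgebra.coe_bracket, hσcoe]
    have h1 : killingForm ℂ g ⁅(z : g), (u : g)⁆ (θ (v : g))
        = -killingForm ℂ g (u : g) ⁅(z : g), θ (v : g)⁆ := hkinv _ _ _
    have h2 : θ ⁅θ (z : g), (v : g)⁆ = ⁅(z : g), θ (v : g)⁆ := by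
      rw [hθbr, hθ2]
    rw [h2] at *
    rw [h1]
    simp
  have hΦσ : ∀ u v, Φ (σ u) (σ v) = Φ u v := by
    intro u v
    rw [hΦapp, hΦapp, hσcoe, hσcoe, hθ2, ← hkθ (θ (u : g)) (v : g), hθ2]
  -- the Cartan subalgebra is σ-stable
  have hHσ : ∀ x ∈ hR, σ x ∈ hR := by
    intro x hx
    obtain ⟨y, hy, hxy⟩ := hRstable x hx
    have : σ x = y := Subtype.ext (by rw [hσcoe, hxy])
    rw [this]
    exact hy
  -- the set defining lPart
  have hS : ∀ x : ↥(realForm g τ hτbr),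
      x ∈ {x : ↥(realForm g τ hτbr) | x ∈ hR ∧ θ (x : g) = -(x : g)} ↔
        x ∈ hR ∧ σ x = -x := by
    intro x
    constructor
    · rintro ⟨h1, h2⟩
      exact ⟨h1, Subtype.ext (by rw [hσcoe, h2]; rfl)⟩
    · rintro ⟨h1, h2⟩
      refine ⟨h1, ?_⟩
      rw [← hσcoe x, h2]
      rfl
  have hCmem : ∀ x : ↥(realForm g τ hτbr), x ∈ lPart g τ hτbr θ hR ↔
      ∀ s ∈ {x : ↥(realForm g τ hτbr) | x ∈ hR ∧ θ (x : g) = -(x : g)}, ⁅x, s⁆ = 0 :=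
    fun x => Iff.rfl
  obtain ⟨habs_a, habs_b, hc, hcCartan, hcMem, hcFix⟩ :=
    abstract18 σ hσ2 hσbr Φ hΦsymm hΦpos hΦrel hΦσ hR hRcartan hHσ
      _ hS (lPart g τ hτbr θ hR) hCmem (lDer g τ hτbr θ hR) rfl
  -- relate embDer to the abstract coercions
  have hemb : ∀ x : ↥(lDer g τ hτbr θ hR),
      embDer g τ hτbr θ hR x = (((x : ↥(lPart g τ hτbr θ hR)) : ↥(realForm g τ hτbr)) : g) :=
    fun x => rfl
  have hembθ : ∀ x y : ↥(lDer g τ hτbr θ hR),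
      ((y : ↥(lPart g τ hτbr θ hR)) : ↥(realForm g τ hτbr))
        = σ ((x : ↥(lPart g τ hτbr θ hR)) : ↥(realForm g τ hτbr)) ↔
      θ (embDer g τ hτbr θ hR x) = embDer g τ hτbr θ hR y := by
    intro x y
    rw [Subtype.ext_iff, hσcoe]
    exact comm
  refine ⟨?_, ?_, ?_⟩
  · -- (a)
    apply Set.Subset.antisymm
    · rintro w ⟨v, ⟨x, rfl⟩, rfl⟩
      obtain ⟨y, hy⟩ := habs_a x
      exact ⟨y, ((hembθ x y).1 hy).symm⟩
    · rintro w ⟨x, rfl⟩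
      obtain ⟨y, hy⟩ := habs_a x
      refine ⟨embDer g τ hτbr θ hR y, ⟨y, rfl⟩, ?_⟩
      have h1 : θ (embDer g τ hτbr θ hR x) = embDer g τ hτbr θ hR y := (hembθ x y).1 hy
      rw [← h1, hθ2]
  · -- (b)
    intro x y hxy hx0
    exact habs_b x y ((hembθ x y).2 hxy) hx0
  · -- (c)
    refine ⟨hc, hcCartan, ?_, ?_⟩
    · apply Set.Subset.antisymm
      · rintro w ⟨x, hx, rfl⟩
        refine ⟨⟨((x : ↥(lPart g τ hτbr θ hR)) : ↥(realForm g τ hτbr)),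
          (hcMem x).1 hx, rfl⟩, ⟨x, rfl⟩⟩
      · rintro w ⟨⟨u, hu, hw⟩, ⟨x, rfl⟩⟩
        refine ⟨x, (hcMem x).2 ?_, rfl⟩
        have : u = ((x : ↥(lPart g τ hτbr θ hR)) : ↥(realForm g τ hτbr)) :=
          Subtype.ext hw
        rwa [this] at hu
    · intro x hx
      have h1 := hcFix x hx
      show θ (embDer g τ hτbr θ hR x) = embDer g τ hτbr θ hR x
      rw [hemb, ← hσcoe]
      exact congrArg Subtype.val h1
end
end

section
/- The set of indecomposable elements of Φ_l⁺ equals the set of those indecomposable elements of Φ⁺ that lie in Φ_l. (This expresses that the fundamental system of the Levi positive system equals the intersection of the fundamental system of the full positive system with the Levi root subsystem: Π_{b_l} = Π_b ∩ Φ_l.) -/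
/-- `α` is an indecomposable element of `Ψ`: it belongs to `Ψ` and cannot be written
as a sum `β + γ` with `β, γ ∈ Ψ`. -/
def IsIndecomposableIn {V : Type*} [AddCommGroup V] (Ψ : Set V) (α : V) : Prop :=
  α ∈ Ψ ∧ ¬∃ β ∈ Ψ, ∃ γ ∈ Ψ, α = β + γ

/-- Let `Φ` be a set of nonzero vectors in a real vector space `V`, let
`f` be a linear functional on `V`, let `Φ_l := {α ∈ Φ | f α = 0}`, let `Φ_l⁺` be an
arbitrary subset of `Φ_l`, and let `Φ⁺ := Φ_l⁺ ∪ {α ∈ Φ | f α > 0}`.  Then the set of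
indecomposable elements of `Φ_l⁺` equals the intersection of the set of indecomposable
elements of `Φ⁺` with `Φ_l`. -/
theorem statement19 (V : Type*) [AddCommGroup V] [Module ℝ V]
    (Φ : Set V) (hΦ : (0 : V) ∉ Φ) (f : V →ₗ[ℝ] ℝ)
    (Φlp : Set V) (hΦlp : Φlp ⊆ {α ∈ Φ | f α = 0}) :
    {α | IsIndecomposableIn Φlp α}
      = {α | IsIndecomposableIn (Φlp ∪ {α ∈ Φ | 0 < f α}) α} ∩ {α ∈ Φ | f α = 0} := by
  ext α
  constructor
  · rintro ⟨hmem, hdec⟩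
    have hαl : α ∈ Φ ∧ f α = 0 := hΦlp hmem
    refine ⟨⟨Or.inl hmem, ?_⟩, hαl⟩
    rintro ⟨β, hβ, γ, hγ, hsum⟩
    have hfβ : 0 ≤ f β := by
      rcases hβ with h | h
      · exact le_of_eq (hΦlp h).2.symm
      · exact le_of_lt h.2
    have hfγ : 0 ≤ f γ := by
      rcases hγ with h | h
      · exact le_of_eq (hΦlp h).2.symm
      · exact le_of_lt h.2
    have hsum' : f β + f γ = 0 := by
      have := congrArg f hsum
      simp [map_add, hαl.2] at this
      linarith [this]
    have hβ0 : f β = 0 := by linarith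
    have hγ0 : f γ = 0 := by linarith
    have hβl : β ∈ Φlp := by
      rcases hβ with h | h
      · exact h
      · exact absurd hβ0 (ne_of_gt h.2)
    have hγl : γ ∈ Φlp := by
      rcases hγ with h | h
      · exact h
      · exact absurd hγ0 (ne_of_gt h.2)
    exact hdec ⟨β, hβl, γ, hγl, hsum⟩
  · rintro ⟨⟨hmem, hdec⟩, hαΦ, hα0⟩
    have hαl : α ∈ Φlp := by
      rcases hmem with h | h
      · exact h
      · exact absurd hα0 (ne_of_gt h.2)
    refine ⟨hαl, ?_⟩
    rintro ⟨β, hβ, γ, hγ, hsum⟩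
    exact hdec ⟨β, Or.inl hβ, γ, Or.inl hγ, hsum⟩
end
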